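/- Let Q = C − c·1 and Q' = C' − c'·1 be two d×d equal-input Markov generators (so C, C' have equal nonnegative rows with row sums c, c' respectively). If exp(Q) = exp(Q'), then Q = Q'. In particular, an equal-input Markov matrix admits at most one equal-input generator embedding. -/

import Mathlib

noncomputable def psi (t : ℝ) : ℝ := ∑' n : ℕ, t ^ n / (Nat.factorial (n+1) : ℝ)

lemma psi_summable (t : ℝ) : Summable fun n : ℕ => t ^ n / (Nat.factorial (n+1) : ℝ) := by
  apply Summable.of_norm
  apply Summable.of_nonneg_of_le (fun n => norm_nonneg _) (fun n => ?_)
    (Real.summable_pow_div_factorial |t|)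
  rw [norm_div, norm_pow, Real.norm_eq_abs, Real.norm_natCast]
  apply div_le_div_of_nonneg_left (by positivity) (by positivity)
  exact_mod_cast Nat.factorial_le (Nat.le_succ n)

lemma psi_mul (t : ℝ) : psi t * t = Real.exp t - 1 := by
  have h1 : Real.exp t = ∑' n : ℕ, t ^ n / (Nat.factorial n : ℝ) := by
    rw [Real.exp_eq_exp_ℝ, NormedSpace.exp_eq_tsum_div]
  have hs : Summable fun n : ℕ => t ^ n / (Nat.factorial n : ℝ) :=
    Real.summable_pow_div_factorial t
  rw [Summable.tsum_eq_zero_add hs] at h1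
  simp only [pow_zero, Nat.factorial_zero, Nat.cast_one, div_one] at h1
  rw [psi, ← tsum_mul_right,
    tsum_congr (fun n => by rw [pow_succ]; ring :
      ∀ n : ℕ, t ^ n / (Nat.factorial (n+1) : ℝ) * t = t ^ (n+1) / (Nat.factorial (n+1) : ℝ)),
    h1]
  ring

lemma psi_zero : psi 0 = 1 := by
  rw [psi, tsum_eq_single 0 (fun n hn => by
    rw [zero_pow hn, zero_div])]
  simp

lemma exp_sq {d : ℕ} (A : Matrix (Fin d) (Fin d) ℝ) (t : ℝ) (h : A * A = t • A) :
    NormedSpace.exp A = 1 + psi t • A := by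
  letI : NormedRing (Matrix (Fin d) (Fin d) ℝ) := Matrix.linftyOpNormedRing
  letI : NormedAlgebra ℝ (Matrix (Fin d) (Fin d) ℝ) := Matrix.linftyOpNormedAlgebra
  have hpow : ∀ n : ℕ, A ^ (n+1) = t ^ n • A := by
    intro n
    induction n with
    | zero => simp
    | succ n ih =>
      rw [pow_succ, ih, Matrix.smul_mul, h, smul_smul, ← pow_succ]
  rw [NormedSpace.exp_eq_tsum (𝕂 := ℝ)]
  beta_reduce
  erw [Summable.tsum_eq_zero_add (NormedSpace.expSeries_summable' (𝕂 := ℝ) A)]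
  simp only [pow_zero, Nat.factorial_zero, Nat.cast_one, inv_one, one_smul]
  congr 1
  calc (∑' n : ℕ, (Nat.factorial (n+1) : ℝ)⁻¹ • A ^ (n+1))
      = ∑' n : ℕ, (t ^ n / (Nat.factorial (n+1) : ℝ)) • A := by
        refine tsum_congr fun n => ?_
        rw [hpow, smul_smul, div_eq_inv_mul, mul_comm]
    _ = psi t • A := by
        rw [psi, Summable.tsum_smul_const (psi_summable t)]

lemma psi_neg_ne_zero (s : ℝ) (hs : 0 ≤ s) : psi (-s) ≠ 0 := by
  rcases eq_or_lt_of_le hs with h0 | h0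
  · rw [← h0, neg_zero, psi_zero]; exact one_ne_zero
  · intro hzero
    have := psi_mul (-s)
    rw [hzero, zero_mul] at this
    have h1 : Real.exp (-s) < 1 := by
      rw [Real.exp_lt_one_iff]; linarith
    linarith [this]

theorem equal_input_generator_unique (d : ℕ)
    (c c' : Fin d → ℝ) (hc : ∀ i, 0 ≤ c i) (hc' : ∀ i, 0 ≤ c' i)
    (Q Q' : Matrix (Fin d) (Fin d) ℝ)
    (hQ : Q = (Matrix.of fun _ j => c j) -
      (∑ j, c j) • (1 : Matrix (Fin d) (Fin d) ℝ))
    (hQ' : Q' = (Matrix.of fun _ j => c' j) -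
      (∑ j, c' j) • (1 : Matrix (Fin d) (Fin d) ℝ))
    (h : NormedSpace.exp Q = NormedSpace.exp Q') :
    Q = Q' := by
  rcases eq_or_ne d 1 with hd | hd
  · subst hd
    have hz : ∀ (f : Fin 1 → ℝ),
        ((Matrix.of fun _ j => f j) - (∑ j, f j) • (1 : Matrix (Fin 1) (Fin 1) ℝ)) = 0 := by
      intro f
      ext i j
      fin_cases i; fin_cases j
      simp [Matrix.one_apply]
    rw [hQ, hQ', hz, hz]
  · set s : ℝ := ∑ j, c j with hset
    set s' : ℝ := ∑ j, c' j with hset'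
    have hs : 0 ≤ s := Finset.sum_nonneg fun i _ => hc i
    have hs' : 0 ≤ s' := Finset.sum_nonneg fun i _ => hc' i
    -- Q * Q = -s • Q
    have key : ∀ (f : Fin d → ℝ),
        ((Matrix.of fun _ j => f j) - (∑ j, f j) • (1 : Matrix (Fin d) (Fin d) ℝ)) *
        ((Matrix.of fun _ j => f j) - (∑ j, f j) • (1 : Matrix (Fin d) (Fin d) ℝ)) =
        (-(∑ j, f j)) • ((Matrix.of fun _ j => f j) - (∑ j, f j) • (1 : Matrix (Fin d) (Fin d) ℝ)) := by
      intro f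
      have hCC : (Matrix.of fun _ j => f j) * (Matrix.of fun _ j => f j)
          = (∑ j, f j) • (Matrix.of fun (_ : Fin d) j => f j) := by
        ext i j
        simp [Matrix.mul_apply, Finset.sum_mul]
      rw [sub_mul, mul_sub, mul_sub, hCC, Matrix.smul_mul, Matrix.mul_smul, Matrix.smul_mul,
        Matrix.one_mul, Matrix.mul_one, Matrix.one_mul]
      module
    have hQQ : Q * Q = (-s) • Q := by rw [hQ, hset]; exact key c
    have hQQ' : Q' * Q' = (-s') • Q' := by rw [hQ', hset']; exact key c'
    have hexp : (1 : Matrix (Fin d) (Fin d) ℝ) + psi (-s) • Q = 1 + psi (-s') • Q' := by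
      rw [← exp_sq Q _ hQQ, ← exp_sq Q' _ hQQ', h]
    have hsmul : psi (-s) • Q = psi (-s') • Q' := by
      exact add_left_cancel hexp
    -- traces
    have htr : ∀ (f : Fin d → ℝ),
        Matrix.trace ((Matrix.of fun _ j => f j) - (∑ j, f j) • (1 : Matrix (Fin d) (Fin d) ℝ))
        = (1 - (d : ℝ)) * (∑ j, f j) := by
      intro f
      rw [Matrix.trace_sub, Matrix.trace_smul, Matrix.trace_one]
      simp [Matrix.trace, Matrix.diag]
      ring
    have htrQ : Matrix.trace Q = (1 - (d : ℝ)) * s := by rw [hQ]; exact htr c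
    have htrQ' : Matrix.trace Q' = (1 - (d : ℝ)) * s' := by rw [hQ']; exact htr c'
    have htreq : psi (-s) * ((1 - (d : ℝ)) * s) = psi (-s') * ((1 - (d : ℝ)) * s') := by
      have := congrArg Matrix.trace hsmul
      rwa [Matrix.trace_smul, Matrix.trace_smul, htrQ, htrQ', smul_eq_mul, smul_eq_mul] at this
    have hd1 : (1 : ℝ) - (d : ℝ) ≠ 0 := by
      intro hcon
      apply hd
      have : (d : ℝ) = 1 := by linarith
      exact_mod_cast this
    have hss : s = s' := by
      have h3 : psi (-s) * s = psi (-s') * s' := by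
        apply mul_left_cancel₀ hd1
        linear_combination htreq
      have e1 : psi (-s) * (-s) = Real.exp (-s) - 1 := psi_mul (-s)
      have e2 : psi (-s') * (-s') = Real.exp (-s') - 1 := psi_mul (-s')
      have hE : Real.exp (-s) = Real.exp (-s') := by linear_combination e2 - e1 - h3
      have := Real.exp_injective hE
      linarith
    rw [hss] at hsmul
    exact smul_right_injective _ (psi_neg_ne_zero s' hs') hsmul
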